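/- Let n ≥ 1, μ > 0, σ > 0, and set γ = μσ. Let M be a symmetric n×n real matrix with orthogonal eigendecomposition M = P·Diag(d)·Pᵀ (P orthogonal, d ∈ ℝ^n), and define Z* = (P·Diag(φ_γ(d₁),…,φ_γ(d_n))·Pᵀ − M)/σ. Then Z* is symmetric positive definite and is the unique minimizer of Z ↦ (σ/2)‖Z + M/σ‖_F² − μ log det Z over the set of symmetric positive definite n×n matrices; that is, the Z-update of the sGS-ADMM satisfies Z* = (φ_γ^+(M) − M)/σ = φ_μσ^+(−M/σ). -/

import Mathlib

open Matrix

/-- The scalar function `φ_γ(t) = (√(t² + 4γ) + t)/2`. -/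
noncomputable def phiMu (γ t : ℝ) : ℝ := (Real.sqrt (t ^ 2 + 4 * γ) + t) / 2

private lemma trace_eq_sum_eig {n : ℕ} {A : Matrix (Fin n) (Fin n) ℝ} (hA : A.IsHermitian) :
    A.trace = ∑ i, hA.eigenvalues i := by
  rw [hA.trace_eq_sum_eigenvalues]
  simp

private lemma logdet_le_trace {n : ℕ} {X : Matrix (Fin n) (Fin n) ℝ} (hX : X.PosDef) :
    Real.log X.det ≤ X.trace - n := by
  have hdet : X.det = ∏ i, hX.1.eigenvalues i := by rw [hX.1.det_eq_prod_eigenvalues]; simp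
  have htr : X.trace = ∑ i, hX.1.eigenvalues i := trace_eq_sum_eig hX.1
  rw [hdet, htr, Real.log_prod (fun i _ => (hX.eigenvalues_pos i).ne')]
  calc ∑ i, Real.log (hX.1.eigenvalues i) ≤ ∑ i, (hX.1.eigenvalues i - 1) :=
        Finset.sum_le_sum fun i _ => Real.log_le_sub_one_of_pos (hX.eigenvalues_pos i)
    _ = ∑ i, hX.1.eigenvalues i - n := by
        rw [Finset.sum_sub_distrib]; simp

private lemma posdef_conj {n : ℕ} {Q A : Matrix (Fin n) (Fin n) ℝ} (hA : A.PosDef)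
    (hQ : IsUnit Q) : (Qᵀ * A * Q).PosDef := by
  rw [Matrix.posDef_iff_dotProduct_mulVec]
  constructor
  · have := Matrix.isHermitian_conjTranspose_mul_mul Q hA.1
    rwa [Matrix.conjTranspose_eq_transpose_of_trivial] at this
  · intro x hx
    have hQx : Q *ᵥ x ≠ 0 :=
      (Matrix.mulVec_injective_iff_isUnit.mpr hQ).ne_iff' (by simp) |>.2 hx
    have key : star x ⬝ᵥ (Qᵀ * A * Q) *ᵥ x = star (Q *ᵥ x) ⬝ᵥ A *ᵥ (Q *ᵥ x) := by
      simp only [star_trivial, ← Matrix.mulVec_mulVec, Matrix.dotProduct_mulVec _ Qᵀ,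
        Matrix.vecMul_transpose]
    rw [key]
    exact (Matrix.posDef_iff_dotProduct_mulVec.mp hA).2 hQx

private lemma pdp_mul {n : ℕ} {P : Matrix (Fin n) (Fin n) ℝ} (hP : Pᵀ * P = 1)
    (a b : Fin n → ℝ) :
    (P * Matrix.diagonal a * Pᵀ) * (P * Matrix.diagonal b * Pᵀ)
      = P * Matrix.diagonal (fun i => a i * b i) * Pᵀ := by
  have : Matrix.diagonal a * (Pᵀ * P) * Matrix.diagonal b = Matrix.diagonal (fun i => a i * b i) := by
    rw [hP, mul_one, Matrix.diagonal_mul_diagonal]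
  calc (P * Matrix.diagonal a * Pᵀ) * (P * Matrix.diagonal b * Pᵀ)
      = P * (Matrix.diagonal a * (Pᵀ * P) * Matrix.diagonal b) * Pᵀ := by
        simp only [Matrix.mul_assoc]
    _ = P * Matrix.diagonal (fun i => a i * b i) * Pᵀ := by rw [this]

private lemma pdp_det {n : ℕ} {P : Matrix (Fin n) (Fin n) ℝ} (hP : Pᵀ * P = 1)
    (a : Fin n → ℝ) : (P * Matrix.diagonal a * Pᵀ).det = ∏ i, a i := by
  have h1 : P.det * Pᵀ.det = 1 := by
    rw [mul_comm, ← Matrix.det_mul, hP, Matrix.det_one]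
  rw [Matrix.det_mul, Matrix.det_mul, Matrix.det_diagonal]
  linear_combination (∏ i, a i) * h1

private lemma pdp_transpose {n : ℕ} (P : Matrix (Fin n) (Fin n) ℝ) (a : Fin n → ℝ) :
    (P * Matrix.diagonal a * Pᵀ)ᵀ = P * Matrix.diagonal a * Pᵀ := by
  rw [Matrix.transpose_mul, Matrix.transpose_mul, Matrix.transpose_transpose,
    Matrix.diagonal_transpose, Matrix.mul_assoc]

private lemma logdet_ineq {n : ℕ} {P : Matrix (Fin n) (Fin n) ℝ} (hP : Pᵀ * P = 1)
    {z : Fin n → ℝ} (hz : ∀ i, 0 < z i) {A : Matrix (Fin n) (Fin n) ℝ} (hA : A.PosDef) :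
    Real.log A.det ≤ Real.log ((P * Matrix.diagonal z * Pᵀ).det)
      + ((P * Matrix.diagonal (fun i => (z i)⁻¹) * Pᵀ) * A).trace - n := by
  have hP2 : P * Pᵀ = 1 := mul_eq_one_comm.mp hP
  set s : Fin n → ℝ := fun i => Real.sqrt (z i) with hs
  have hsz : ∀ i, s i * s i = z i := fun i => Real.mul_self_sqrt (hz i).le
  have hsne : ∀ i, s i ≠ 0 := fun i => ne_of_gt (Real.sqrt_pos.mpr (hz i))
  set T : Matrix (Fin n) (Fin n) ℝ := P * Matrix.diagonal (fun i => (s i)⁻¹) * Pᵀ with hT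
  have hfun1 : (fun i => (s i)⁻¹ * (s i)⁻¹) = fun i => (z i)⁻¹ := by
    funext i; rw [← hsz i, mul_inv]
  have hfun2 : (fun i => (s i)⁻¹ * s i) = fun _ => (1:ℝ) := by
    funext i; exact inv_mul_cancel₀ (hsne i)
  have hTT : T * T = P * Matrix.diagonal (fun i => (z i)⁻¹) * Pᵀ := by
    rw [hT, pdp_mul hP, hfun1]
  have hTunit : IsUnit T := by
    have hmul : T * (P * Matrix.diagonal s * Pᵀ) = 1 := by
      rw [hT, pdp_mul hP, hfun2, Matrix.diagonal_one, Matrix.mul_one, hP2]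
    refine (Matrix.isUnit_iff_isUnit_det T).mpr (IsUnit.of_mul_eq_one (P * Matrix.diagonal s * Pᵀ).det ?_)
    rw [← Matrix.det_mul, hmul, Matrix.det_one]
  have hTsymm : Tᵀ = T := pdp_transpose P _
  set X : Matrix (Fin n) (Fin n) ℝ := T * A * T with hX
  have hXpd : X.PosDef := by
    have := posdef_conj hA hTunit
    rwa [hTsymm] at this
  have hXdet : X.det = (∏ i, (z i)⁻¹) * A.det := by
    have hTd : T.det * T.det = ∏ i, (z i)⁻¹ := by
      rw [← Matrix.det_mul, hTT, pdp_det hP]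
    rw [hX, Matrix.det_mul, Matrix.det_mul]
    linear_combination A.det * hTd
  have hXtr : X.trace = ((P * Matrix.diagonal (fun i => (z i)⁻¹) * Pᵀ) * A).trace := by
    rw [hX, Matrix.trace_mul_comm (T * A) T, ← Matrix.mul_assoc, hTT]
  have h3 := logdet_le_trace hXpd
  rw [hXdet, hXtr] at h3
  have hprod : (0:ℝ) < ∏ i, (z i)⁻¹ := Finset.prod_pos fun i _ => inv_pos.mpr (hz i)
  rw [Real.log_mul hprod.ne' hA.det_pos.ne', Real.log_prod
    (fun i _ => inv_ne_zero (hz i).ne')] at h3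
  rw [pdp_det hP z, Real.log_prod (fun i _ => (hz i).ne')]
  have hneg : ∑ i, Real.log (z i)⁻¹ = - ∑ i, Real.log (z i) := by
    rw [← Finset.sum_neg_distrib]
    exact Finset.sum_congr rfl fun i _ => Real.log_inv _
  rw [hneg] at h3
  linarith

private lemma sum_mul_eq_trace {n : ℕ} (A B : Matrix (Fin n) (Fin n) ℝ) :
    ∑ i, ∑ j, A i j * B i j = (A * Bᵀ).trace := by
  simp [Matrix.trace, Matrix.diag, Matrix.mul_apply]

private lemma phi_sub_pos {γ : ℝ} (hγ : 0 < γ) (t : ℝ) : 0 < phiMu γ t - t := by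
  have h1 : t < Real.sqrt (t ^ 2 + 4 * γ) := by
    calc t ≤ |t| := le_abs_self t
      _ = Real.sqrt (t ^ 2) := (Real.sqrt_sq_eq_abs t).symm
      _ < Real.sqrt (t ^ 2 + 4 * γ) := Real.sqrt_lt_sqrt (sq_nonneg t) (by linarith)
  unfold phiMu
  linarith

private lemma phi_mul {γ : ℝ} (hγ : 0 < γ) (t : ℝ) :
    phiMu γ t * (phiMu γ t - t) = γ := by
  have hsq : Real.sqrt (t ^ 2 + 4 * γ) ^ 2 = t ^ 2 + 4 * γ :=
    Real.sq_sqrt (by positivity)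
  unfold phiMu
  nlinarith [hsq]

/-- the `Z`-update of the sGS-ADMM.  For `μ, σ > 0`, `γ = μσ`, and a
symmetric `M = P Diag(d) Pᵀ` with `P` orthogonal, the matrix
`Z* = (P Diag(φ_γ(d)) Pᵀ − M)/σ = (φ_γ^+(M) − M)/σ` is symmetric positive definite and
is the unique minimizer of `Z ↦ (σ/2)‖Z + M/σ‖_F² − μ log det Z` over symmetric positive
definite matrices. -/
theorem sgs_admm_Z_update (n : ℕ) (hn : 1 ≤ n) (μ σ : ℝ) (hμ : 0 < μ) (hσ : 0 < σ)
    (γ : ℝ) (hγ : γ = μ * σ)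
    (M : Matrix (Fin n) (Fin n) ℝ) (hM : M.IsSymm)
    (P : Matrix (Fin n) (Fin n) ℝ) (hP : Pᵀ * P = 1) (d : Fin n → ℝ)
    (hMd : M = P * Matrix.diagonal d * Pᵀ)
    (Zstar : Matrix (Fin n) (Fin n) ℝ)
    (hZstar : Zstar = σ⁻¹ • (P * Matrix.diagonal (fun i => phiMu γ (d i)) * Pᵀ - M)) :
    Zstar.PosDef ∧
      ∀ Z : Matrix (Fin n) (Fin n) ℝ, Z.PosDef → Z ≠ Zstar →
        (σ / 2) * ∑ i : Fin n, ∑ j : Fin n, (Zstar i j + σ⁻¹ * M i j) ^ 2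
            - μ * Real.log Zstar.det
          < (σ / 2) * ∑ i : Fin n, ∑ j : Fin n, (Z i j + σ⁻¹ * M i j) ^ 2
            - μ * Real.log Z.det := by
  have hγ0 : 0 < γ := hγ ▸ mul_pos hμ hσ
  have hP2 : P * Pᵀ = 1 := mul_eq_one_comm.mp hP
  set z : Fin n → ℝ := fun i => σ⁻¹ * (phiMu γ (d i) - d i) with hz
  have hzpos : ∀ i, 0 < z i := fun i =>
    mul_pos (inv_pos.mpr hσ) (phi_sub_pos hγ0 (d i))
  have hsmulz : σ⁻¹ • (fun i => phiMu γ (d i) - d i) = z := by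
    funext i; simp [hz, smul_eq_mul]
  -- Z* = P diag(z) Pᵀ
  have hZform : Zstar = P * Matrix.diagonal z * Pᵀ := by
    rw [hZstar, hMd, ← Matrix.sub_mul, ← Matrix.mul_sub, Matrix.diagonal_sub,
      ← Matrix.smul_mul, ← Matrix.mul_smul, ← Matrix.diagonal_smul, hsmulz]
  -- positive definiteness
  have hPunit : IsUnit Pᵀ := by
    refine (Matrix.isUnit_iff_isUnit_det _).mpr (IsUnit.of_mul_eq_one P.det ?_)
    rw [mul_comm, ← Matrix.det_mul, hP2, Matrix.det_one]
  have hPD : Zstar.PosDef := by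
    rw [hZform]
    have := posdef_conj (Matrix.posDef_diagonal_iff.mpr hzpos) hPunit
    rwa [Matrix.transpose_transpose] at this
  refine ⟨hPD, fun Z hZpd hne => ?_⟩
  set Zinv : Matrix (Fin n) (Fin n) ℝ := P * Matrix.diagonal (fun i => (z i)⁻¹) * Pᵀ with hZi
  -- symmetry of Z
  have hZsym : Zᵀ = Z := by
    ext i j
    have h := congrFun (congrFun hZpd.1 i) j
    simpa [Matrix.conjTranspose_apply] using h
  set D : Matrix (Fin n) (Fin n) ℝ := Z - Zstar with hD
  have hDne : D ≠ 0 := sub_ne_zero.mpr hne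
  -- strict positivity of the quadratic term
  have hQpos : 0 < ∑ i, ∑ j, D i j ^ 2 := by
    have hnn : ∀ i, (0:ℝ) ≤ ∑ j, D i j ^ 2 := fun i =>
      Finset.sum_nonneg fun j _ => sq_nonneg _
    obtain ⟨i0, hi0⟩ := Function.ne_iff.mp hDne
    obtain ⟨j0, hj0⟩ := Function.ne_iff.mp hi0
    have h1 : (0:ℝ) < D i0 j0 ^ 2 := pow_two_pos_of_ne_zero hj0
    have h2 : D i0 j0 ^ 2 ≤ ∑ j, D i0 j ^ 2 :=
      Finset.single_le_sum (f := fun j => D i0 j ^ 2) (fun j _ => sq_nonneg _)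
        (Finset.mem_univ j0)
    have h3 : ∑ j, D i0 j ^ 2 ≤ ∑ i, ∑ j, D i j ^ 2 :=
      Finset.single_le_sum (f := fun i => ∑ j, D i j ^ 2) (fun i _ => hnn i)
        (Finset.mem_univ i0)
    linarith
  -- sum decomposition
  have key1 : ∑ i, ∑ j, (Z i j + σ⁻¹ * M i j) ^ 2
      = ∑ i, ∑ j, (Zstar i j + σ⁻¹ * M i j) ^ 2 + ∑ i, ∑ j, D i j ^ 2
        + 2 * ∑ i, ∑ j, (Zstar + σ⁻¹ • M) i j * D i j := by
    have h : ∀ i j, (Z i j + σ⁻¹ * M i j) ^ 2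
        = (Zstar i j + σ⁻¹ * M i j) ^ 2 + D i j ^ 2
          + 2 * ((Zstar + σ⁻¹ • M) i j * D i j) := by
      intro i j
      simp only [hD, Matrix.sub_apply, Matrix.add_apply, Matrix.smul_apply, smul_eq_mul]
      ring
    simp_rw [h, Finset.sum_add_distrib, ← Finset.mul_sum]
  -- scalar stationarity
  have hμz : ∀ i, μ * (z i)⁻¹ = phiMu γ (d i) := by
    intro i
    have h1 : phiMu γ (d i) * (phiMu γ (d i) - d i) = γ := phi_mul hγ0 (d i)
    have h2 : z i ≠ 0 := (hzpos i).ne'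
    have h3 : phiMu γ (d i) * z i = μ := by
      simp only [hz]
      field_simp
      nlinarith [h1, hγ]
    field_simp
    nlinarith [h3]
  have hfz : (fun i => (σ • z) i + d i) = fun i => phiMu γ (d i) := by
    funext i
    simp only [Pi.smul_apply, smul_eq_mul, hz]
    field_simp
    ring
  have hfz2 : (μ • fun i => (z i)⁻¹) = fun i => phiMu γ (d i) := by
    funext i
    simp only [Pi.smul_apply, smul_eq_mul]
    exact hμz i
  -- the stationarity identity σ•(Z* + σ⁻¹•M) = μ•Zinv
  have key3 : σ • (Zstar + σ⁻¹ • M) = μ • Zinv := by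
    have h1 : σ • Zstar + M = P * Matrix.diagonal (fun i => phiMu γ (d i)) * Pᵀ := by
      rw [hZform, ← Matrix.smul_mul, ← Matrix.mul_smul, ← Matrix.diagonal_smul, hMd,
        ← Matrix.add_mul, ← Matrix.mul_add, Matrix.diagonal_add, hfz]
    have h2 : μ • Zinv = P * Matrix.diagonal (fun i => phiMu γ (d i)) * Pᵀ := by
      rw [hZi, ← Matrix.smul_mul, ← Matrix.mul_smul, ← Matrix.diagonal_smul, hfz2]
    rw [smul_add, smul_smul, mul_inv_cancel₀ hσ.ne', one_smul, h1, h2]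
  -- trace identities
  have hDsym : Dᵀ = D := by
    rw [hD, Matrix.transpose_sub, hZsym, hZform, pdp_transpose]
  have key2 : ∑ i, ∑ j, (Zstar + σ⁻¹ • M) i j * D i j
      = ((Zstar + σ⁻¹ • M) * D).trace := by
    rw [sum_mul_eq_trace, hDsym]
  have htraceid : σ * ((Zstar + σ⁻¹ • M) * D).trace = μ * (Zinv * D).trace := by
    have : (σ • (Zstar + σ⁻¹ • M)) * D = (μ • Zinv) * D := by rw [key3]
    have h4 := congrArg Matrix.trace this
    rwa [Matrix.smul_mul, Matrix.smul_mul, Matrix.trace_smul, Matrix.trace_smul,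
      smul_eq_mul, smul_eq_mul] at h4
  -- trace (Zinv * Zstar) = n
  have hZZ : Zinv * Zstar = 1 := by
    rw [hZi, hZform, pdp_mul hP]
    have : (fun i => (z i)⁻¹ * z i) = fun _ => (1:ℝ) := by
      funext i; exact inv_mul_cancel₀ (hzpos i).ne'
    rw [this, Matrix.diagonal_one, Matrix.mul_one, hP2]
  have htrZZ : (Zinv * Zstar).trace = (n : ℝ) := by rw [hZZ]; simp
  -- log-det inequality
  have hlog : Real.log Z.det ≤ Real.log Zstar.det + (Zinv * D).trace := by
    have h5 := logdet_ineq hP hzpos hZpd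
    rw [← hZform, ← hZi] at h5
    have h6 : (Zinv * D).trace = (Zinv * Z).trace - (n : ℝ) := by
      rw [hD, Matrix.mul_sub, Matrix.trace_sub, htrZZ]
    linarith
  -- assemble
  have hmul := mul_le_mul_of_nonneg_left hlog hμ.le
  rw [key2] at key1
  rw [key1]
  nlinarith [hQpos, htraceid, hmul, hσ]
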